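/- Let Γ = ℤ² ⋊ ℤ be the semidirect product where the generator t of ℤ acts on ℤ² by v ↦ −v, with elements written as pairs (v,k), v ∈ ℤ², k ∈ ℤ, and multiplication (v,k)·(w,ℓ) = (v + (−1)^k w, k+ℓ). Let φ : Γ → Γ be given by φ(v,k) = (Mv, −k) where M is the 2×2 integer matrix with rows (0,1), (−1,0). Then: φ is an automorphism of Γ; the center of Γ is Z(Γ) = {(0,k) : k even}; the Reidemeister numbers satisfy R(φ) = 4, R(φ|_{Z(Γ)}) = 2, and R(φ̄) = 4 where φ̄ is the induced automorphism of Γ/Z(Γ). In particular R(φ) ≠ R(φ|_{Z(Γ)}) · R(φ̄), so the product formula for Reidemeister numbers fails for this torsion-free polycyclic group. -/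

import Mathlib

/-- The `φ`-twisted conjugacy relation: `x` and `y` are `φ`-twisted conjugate if
`x = z * y * (φ z)⁻¹` for some `z`. -/
def twistedConj {G : Type*} [Group G] (φ : G →* G) (x y : G) : Prop :=
  ∃ z : G, x = z * y * (φ z)⁻¹

/-- The Reidemeister number `R(φ) ∈ ℕ_{>0} ∪ {∞}` of an endomorphism `φ`: the number of
`φ`-twisted conjugacy classes, with value `⊤` when there are infinitely many. -/
noncomputable def reidemeisterNumber {G : Type*} [Group G] (φ : G →* G) : ℕ∞ :=
  @ite _ (Finite (Quot (twistedConj φ))) (Classical.propDecidable _)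
    ((Nat.card (Quot (twistedConj φ)) : ℕ∞)) ⊤

/-- The action of `ℤ` (written multiplicatively) on `ℤ²` (written multiplicatively) where
the generator acts by `v ↦ -v`. -/
abbrev negAction : Multiplicative ℤ →* MulAut (Multiplicative (ℤ × ℤ)) :=
  zpowersHom (MulAut (Multiplicative (ℤ × ℤ))) (MulEquiv.inv (Multiplicative (ℤ × ℤ)))

/-- `Γ = ℤ² ⋊ ℤ`, the generator `t` of `ℤ` acting on `ℤ²` by `v ↦ -v`. -/
abbrev Gamma15 : Type := Multiplicative (ℤ × ℤ) ⋊[negAction] Multiplicative ℤ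

/-- The element `(v, k)` of `Γ = ℤ² ⋊ ℤ`. -/
abbrev Gamma15.pair (v : ℤ × ℤ) (k : ℤ) : Gamma15 :=
  ⟨Multiplicative.ofAdd v, Multiplicative.ofAdd k⟩

def sg (k : ℤ) : ℤ := (((-1 : ℤˣ) ^ k : ℤˣ) : ℤ)

lemma sg_eq_one_or (k : ℤ) : sg k = 1 ∨ sg k = -1 := by
  rcases Int.units_eq_one_or ((-1 : ℤˣ) ^ k) with h | h <;> simp [sg, h]

lemma sg_add (k l : ℤ) : sg (k + l) = sg k * sg l := by
  simp [sg, zpow_add]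

lemma sg_mul_self (k : ℤ) : sg k * sg k = 1 := by
  rcases sg_eq_one_or k with h | h <;> rw [h] <;> ring

lemma sg_neg (k : ℤ) : sg (-k) = sg k := by
  have h : sg (-k) * sg k = 1 := by rw [← sg_add]; simp [sg]
  rcases sg_eq_one_or k with h1 | h1 <;> rcases sg_eq_one_or (-k) with h2 | h2 <;>
    simp_all

lemma sg_succ (k : ℤ) : sg (k + 1) = - sg k := by
  rw [sg_add]; simp [sg]

lemma sg_cast2 (k : ℤ) : ((sg k : ℤ) : ZMod 2) = 1 := by
  rcases sg_eq_one_or k with h | h <;> rw [h] <;> decide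

lemma sg_even {k : ℤ} (h : Even k) : sg k = 1 := by
  obtain ⟨n, rfl⟩ := h
  rw [sg_add, sg_mul_self]

lemma invAut_zpow (k : ℤ) : ∀ (x : Multiplicative (ℤ × ℤ)),
    ((MulEquiv.inv (Multiplicative (ℤ × ℤ)) : MulAut (Multiplicative (ℤ × ℤ))) ^ k) x
      = x ^ sg k := by
  induction k using Int.induction_on with
  | zero => simp [sg]
  | succ n ih =>
      intro x
      have h1 : ((MulEquiv.inv (Multiplicative (ℤ × ℤ)) : MulAut _) ^ ((n : ℤ) + 1)) x
          = ((MulEquiv.inv (Multiplicative (ℤ × ℤ)) : MulAut _) ^ (n : ℤ))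
            ((MulEquiv.inv (Multiplicative (ℤ × ℤ)) : MulAut _) x) := by
        rw [zpow_add_one]; rfl
      rw [h1, ih]
      rw [sg_succ]
      show (x⁻¹) ^ sg (n : ℤ) = _
      rw [inv_zpow, ← zpow_neg]
  | pred n ih =>
      intro x
      have h1 : ((MulEquiv.inv (Multiplicative (ℤ × ℤ)) : MulAut _) ^ (-(n : ℤ) - 1)) x
          = ((MulEquiv.inv (Multiplicative (ℤ × ℤ)) : MulAut _) ^ (-(n : ℤ)))
            (((MulEquiv.inv (Multiplicative (ℤ × ℤ)) : MulAut _)⁻¹) x) := by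
        rw [zpow_sub_one]; rfl
      rw [h1, ih]
      have h2 : sg (-(n : ℤ) - 1) = - sg (-(n : ℤ)) := by
        have := sg_succ (-(n : ℤ) - 1)
        simp only [sub_add_cancel] at this
        omega
      rw [h2]
      show (x⁻¹) ^ sg (-(n : ℤ)) = _
      rw [inv_zpow, ← zpow_neg]

lemma mul_pair (v w : ℤ × ℤ) (k l : ℤ) :
    Gamma15.pair v k * Gamma15.pair w l = Gamma15.pair (v + sg k • w) (k + l) := by
  ext : 2
  · show (Multiplicative.ofAdd v * negAction (Multiplicative.ofAdd k) (Multiplicative.ofAdd w)).toAdd = _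
    rw [zpowersHom_apply]
    show (Multiplicative.ofAdd v *
      ((MulEquiv.inv (Multiplicative (ℤ × ℤ)) : MulAut _) ^ k) (Multiplicative.ofAdd w)).toAdd = _
    rw [invAut_zpow, ← ofAdd_zsmul, ← ofAdd_add]
  · rfl

lemma pair_inj {v w : ℤ × ℤ} {k l : ℤ} (h : Gamma15.pair v k = Gamma15.pair w l) :
    v = w ∧ k = l := by
  refine ⟨congrArg (fun g : Gamma15 => g.left.toAdd) h, congrArg (fun g : Gamma15 => g.right.toAdd) h⟩

lemma inv_pair (v : ℤ × ℤ) (k : ℤ) :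
    (Gamma15.pair v k)⁻¹ = Gamma15.pair (-(sg k • v)) (-k) := by
  apply inv_eq_of_mul_eq_one_right
  rw [mul_pair]
  have : v + sg k • -(sg k • v) = 0 := by
    rw [smul_neg, smul_smul, sg_mul_self, one_smul, add_neg_cancel]
  rw [this, add_neg_cancel]
  rfl



lemma pair_congr {v w : ℤ × ℤ} {k l : ℤ} (h1 : v = w) (h2 : k = l) :
    Gamma15.pair v k = Gamma15.pair w l := by rw [h1, h2]

lemma sg_one : sg 1 = -1 := by simp [sg]

lemma sg_zero : sg 0 = 1 := by simp [sg]

lemma sg_odd {k : ℤ} (h : Odd k) : sg k = -1 := by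
  obtain ⟨n, rfl⟩ := h
  rw [sg_add, sg_even ⟨n, by ring⟩, sg_one]; ring

lemma conj_formula (φ : Gamma15 →* Gamma15)
    (hφ : ∀ (v : ℤ × ℤ) (k : ℤ),
      φ (Gamma15.pair v k) = Gamma15.pair (v.2, -v.1) (-k))
    (u w : ℤ × ℤ) (m l : ℤ) :
    Gamma15.pair u m * Gamma15.pair w l * (φ (Gamma15.pair u m))⁻¹
      = Gamma15.pair (u + sg m • w - sg l • (u.2, -u.1)) (l + 2 * m) := by
  rw [hφ, inv_pair, mul_pair, mul_pair]
  apply pair_congr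
  · rw [smul_neg, smul_smul]
    have hc : sg (m + l) * sg (-m) = sg l := by
      rw [sg_add, sg_neg]
      linear_combination sg l * sg_mul_self m
    rw [hc, ← sub_eq_add_neg]
  · ring

lemma center_iff (g : Gamma15) : g ∈ Subgroup.center Gamma15 ↔
    (g.left = 1 ∧ ∃ m : ℤ, g.right = Multiplicative.ofAdd (2 * m)) := by
  rw [Subgroup.mem_center_iff]
  obtain ⟨gl, gr⟩ := g
  have hg : (⟨gl, gr⟩ : Gamma15) = Gamma15.pair gl.toAdd gr.toAdd := rfl
  set v := gl.toAdd with hv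
  set k := gr.toAdd with hk
  constructor
  · intro h
    have h1 := h (Gamma15.pair 0 1)
    have h2 := h (Gamma15.pair (1, 0) 0)
    rw [hg, mul_pair, mul_pair] at h1 h2
    obtain ⟨e1, _⟩ := pair_inj h1
    obtain ⟨e2, _⟩ := pair_inj h2
    rw [sg_one] at e1
    have hv0 : v = 0 := by
      have a1 := congrArg Prod.fst e1
      have a2 := congrArg Prod.snd e1
      simp [Prod.ext_iff] at a1 a2 ⊢
      constructor <;> omega
    have hkeven : Even k := by
      by_contra hodd
      rw [Int.not_even_iff_odd] at hodd
      rw [sg_odd hodd] at e2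
      have a1 := congrArg Prod.fst e2
      simp [sg_zero] at a1
      omega
    obtain ⟨r, hr⟩ := hkeven
    refine ⟨by show Multiplicative.ofAdd v = 1; rw [hv0]; rfl, r, ?_⟩
    show Multiplicative.ofAdd k = Multiplicative.ofAdd (2 * r)
    exact congrArg _ (by omega)
  · rintro ⟨h1, m, h2⟩ g'
    have hgl : gl = Multiplicative.ofAdd 0 := h1
    have hgr : gr = Multiplicative.ofAdd (2 * m) := h2
    subst hgl hgr
    have hg' : g' = Gamma15.pair g'.left.toAdd g'.right.toAdd := rfl
    rw [hg']
    show Gamma15.pair _ _ * Gamma15.pair 0 (2 * m) = Gamma15.pair 0 (2 * m) * Gamma15.pair _ _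
    rw [mul_pair, mul_pair, sg_even (k := 2 * m) ⟨m, by ring⟩]
    apply pair_congr
    · simp
    · ring

def inva (g : Gamma15) : ZMod 2 × ZMod 2 :=
  ((g.right.toAdd : ZMod 2), ((g.left.toAdd.1 + g.left.toAdd.2 : ℤ) : ZMod 2))

lemma inva_pair (v : ℤ × ℤ) (k : ℤ) :
    inva (Gamma15.pair v k) = ((k : ZMod 2), ((v.1 + v.2 : ℤ) : ZMod 2)) := rfl

lemma two_zmod : (2 : ZMod 2) = 0 := rfl

lemma conj_iff (φ : Gamma15 →* Gamma15)
    (hφ : ∀ (v : ℤ × ℤ) (k : ℤ),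
      φ (Gamma15.pair v k) = Gamma15.pair (v.2, -v.1) (-k))
    (x y : Gamma15) : twistedConj φ x y ↔ inva x = inva y := by
  obtain ⟨xl, xr⟩ := x
  obtain ⟨yl, yr⟩ := y
  set a := xl.toAdd
  set kx := xr.toAdd
  set w := yl.toAdd
  set l := yr.toAdd
  constructor
  · rintro ⟨z, hz⟩
    obtain ⟨zl, zr⟩ := z
    set u := zl.toAdd
    set m := zr.toAdd
    have hz' : Gamma15.pair a kx
        = Gamma15.pair u m * Gamma15.pair w l * (φ (Gamma15.pair u m))⁻¹ := hz
    rw [conj_formula φ hφ] at hz'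
    obtain ⟨h1, h2⟩ := pair_inj hz'
    show inva (Gamma15.pair a kx) = inva (Gamma15.pair w l)
    rw [inva_pair, inva_pair]
    simp only [Prod.mk.injEq]
    constructor
    · rw [h2]; push_cast; linear_combination ((m : ℤ) : ZMod 2) * two_zmod
    · rw [h1]
      simp only [Prod.fst_add, Prod.snd_add, Prod.fst_sub, Prod.snd_sub,
        Prod.smul_fst, Prod.smul_snd, smul_eq_mul]
      push_cast
      rw [sg_cast2, sg_cast2]
      linear_combination ((u.1 : ℤ) : ZMod 2) * two_zmod
  · intro h
    have h' : inva (Gamma15.pair a kx) = inva (Gamma15.pair w l) := h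
    rw [inva_pair, inva_pair, Prod.mk.injEq] at h'
    obtain ⟨hk, hv⟩ := h'
    have hmod : kx % 2 = l % 2 := (ZMod.intCast_eq_intCast_iff _ _ _).1 hk
    have hpar : (a.1 + a.2) % 2 = (w.1 + w.2) % 2 := (ZMod.intCast_eq_intCast_iff _ _ _).1 hv
    set m := (kx - l) / 2 with hm
    have hkm : kx = l + 2 * m := by omega
    show twistedConj φ (Gamma15.pair a kx) (Gamma15.pair w l)
    rcases sg_eq_one_or m with hδ | hδ <;> rcases sg_eq_one_or l with hε | hε
    · refine ⟨Gamma15.pair ((a.1 - w.1 + a.2 - w.2) / 2,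
        a.2 - w.2 - (a.1 - w.1 + a.2 - w.2) / 2) m, ?_⟩
      rw [conj_formula φ hφ]
      apply pair_congr _ hkm
      rw [hδ, hε]
      simp only [Prod.ext_iff, Prod.fst_add, Prod.snd_add, Prod.fst_sub, Prod.snd_sub,
        Prod.smul_fst, Prod.smul_snd, smul_eq_mul, one_mul]
      constructor <;> omega
    · refine ⟨Gamma15.pair (a.1 - w.1 - (a.1 - w.1 + a.2 - w.2) / 2,
        (a.1 - w.1 + a.2 - w.2) / 2) m, ?_⟩
      rw [conj_formula φ hφ]
      apply pair_congr _ hkm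
      rw [hδ, hε]
      simp only [Prod.ext_iff, Prod.fst_add, Prod.snd_add, Prod.fst_sub, Prod.snd_sub,
        Prod.smul_fst, Prod.smul_snd, smul_eq_mul, one_mul, neg_mul, neg_neg]
      constructor <;> omega
    · refine ⟨Gamma15.pair ((a.1 + w.1 + a.2 + w.2) / 2,
        a.2 + w.2 - (a.1 + w.1 + a.2 + w.2) / 2) m, ?_⟩
      rw [conj_formula φ hφ]
      apply pair_congr _ hkm
      rw [hδ, hε]
      simp only [Prod.ext_iff, Prod.fst_add, Prod.snd_add, Prod.fst_sub, Prod.snd_sub,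
        Prod.smul_fst, Prod.smul_snd, smul_eq_mul, one_mul, neg_mul, neg_neg]
      constructor <;> omega
    · refine ⟨Gamma15.pair (a.1 + w.1 - (a.1 + w.1 + a.2 + w.2) / 2,
        (a.1 + w.1 + a.2 + w.2) / 2) m, ?_⟩
      rw [conj_formula φ hφ]
      apply pair_congr _ hkm
      rw [hδ, hε]
      simp only [Prod.ext_iff, Prod.fst_add, Prod.snd_add, Prod.fst_sub, Prod.snd_sub,
        Prod.smul_fst, Prod.smul_snd, smul_eq_mul, one_mul, neg_mul, neg_neg]
      constructor <;> omega



noncomputable def quotEquivOfInvariant {α β : Type*} (r : α → α → Prop) (f : α → β)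
    (h1 : ∀ a b, r a b → f a = f b)
    (h2 : ∀ a b, f a = f b → r a b)
    (h3 : Function.Surjective f) : Quot r ≃ β :=
  Equiv.ofBijective (Quot.lift f h1) (by
    constructor
    · intro x y
      induction x using Quot.ind with | _ a => ?_
      induction y using Quot.ind with | _ b => ?_
      intro h
      exact Quot.sound (h2 a b h)
    · intro b
      obtain ⟨a, ha⟩ := h3 b
      exact ⟨Quot.mk r a, ha⟩)

lemma reid_eq_of_equiv {G : Type*} [Group G] (φ : G →* G) {β : Type*} [Finite β]
    (e : Quot (twistedConj φ) ≃ β) : reidemeisterNumber φ = (Nat.card β : ℕ∞) := by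
  have hfin : Finite (Quot (twistedConj φ)) := Finite.of_equiv _ e.symm
  rw [reidemeisterNumber, if_pos hfin, Nat.card_congr e]

lemma inva_surj : Function.Surjective inva := by
  intro p
  have hcase : ∀ q : ZMod 2, q = 0 ∨ q = 1 := by decide
  obtain ⟨p1, p2⟩ := p
  rcases hcase p1 with rfl | rfl <;> rcases hcase p2 with rfl | rfl
  · exact ⟨Gamma15.pair (0, 0) 0, by rw [inva_pair]; norm_num⟩
  · exact ⟨Gamma15.pair (1, 0) 0, by rw [inva_pair]; norm_num⟩
  · exact ⟨Gamma15.pair (0, 0) 1, by rw [inva_pair]; norm_num⟩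
  · exact ⟨Gamma15.pair (1, 0) 1, by rw [inva_pair]; norm_num⟩

lemma center_eq (g : Gamma15) (hg : g ∈ Subgroup.center Gamma15) :
    ∃ m : ℤ, g = Gamma15.pair 0 (2 * m) := by
  obtain ⟨h1, m, h2⟩ := (center_iff g).1 hg
  refine ⟨m, ?_⟩
  obtain ⟨gl, gr⟩ := g
  have hgl : gl = Multiplicative.ofAdd 0 := h1
  have hgr : gr = Multiplicative.ofAdd (2 * m) := h2
  rw [hgl, hgr]

lemma center_mem (m : ℤ) : Gamma15.pair 0 (2 * m) ∈ Subgroup.center Gamma15 :=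
  (center_iff _).2 ⟨rfl, m, rfl⟩

noncomputable def invZ (x : ↥(Subgroup.center Gamma15)) : ZMod 2 :=
  ((((x : Gamma15).right.toAdd / 2 : ℤ)) : ZMod 2)

lemma invZ_eq (x : ↥(Subgroup.center Gamma15)) {m : ℤ}
    (h : (x : Gamma15) = Gamma15.pair 0 (2 * m)) : invZ x = ((m : ℤ) : ZMod 2) := by
  unfold invZ
  rw [h]
  show (((2 * m / 2 : ℤ)) : ZMod 2) = _
  congr 1
  omega

lemma phi_center (φ : Gamma15 →* Gamma15)
    (hφ : ∀ (v : ℤ × ℤ) (k : ℤ),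
      φ (Gamma15.pair v k) = Gamma15.pair (v.2, -v.1) (-k))
    (m : ℤ) : φ (Gamma15.pair 0 (2 * m)) = Gamma15.pair 0 (-(2 * m)) := by
  rw [hφ]; rfl

lemma central_prod (my mz : ℤ) (φ : Gamma15 →* Gamma15)
    (hφ : ∀ (v : ℤ × ℤ) (k : ℤ),
      φ (Gamma15.pair v k) = Gamma15.pair (v.2, -v.1) (-k)) :
    Gamma15.pair 0 (2 * mz) * Gamma15.pair 0 (2 * my) * (φ (Gamma15.pair 0 (2 * mz)))⁻¹
      = Gamma15.pair 0 (2 * (my + 2 * mz)) := by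
  rw [phi_center φ hφ, inv_pair, mul_pair, mul_pair]
  apply pair_congr
  · simp
  · ring

lemma conjZ_iff (φ : Gamma15 →* Gamma15)
    (hφ : ∀ (v : ℤ × ℤ) (k : ℤ),
      φ (Gamma15.pair v k) = Gamma15.pair (v.2, -v.1) (-k))
    (φZ : ↥(Subgroup.center Gamma15) →* ↥(Subgroup.center Gamma15))
    (hφZ : ∀ x : ↥(Subgroup.center Gamma15), (φZ x : Gamma15) = φ (x : Gamma15))
    (x y : ↥(Subgroup.center Gamma15)) :
    twistedConj φZ x y ↔ invZ x = invZ y := by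
  obtain ⟨mx, hx⟩ := center_eq (x : Gamma15) x.2
  obtain ⟨my, hy⟩ := center_eq (y : Gamma15) y.2
  rw [invZ_eq x hx, invZ_eq y hy]
  constructor
  · rintro ⟨z, hz⟩
    obtain ⟨mz, hzc⟩ := center_eq (z : Gamma15) z.2
    have hc : (x : Gamma15) = (z : Gamma15) * (y : Gamma15) * (φ (z : Gamma15))⁻¹ := by
      rw [hz]
      push_cast
      rw [hφZ]
    rw [hx, hy, hzc, central_prod my mz φ hφ] at hc
    obtain ⟨-, h2⟩ := pair_inj hc
    have : mx = my + 2 * mz := by omega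
    rw [this]
    push_cast
    linear_combination ((mz : ℤ) : ZMod 2) * two_zmod
  · intro h
    have hmod : mx % 2 = my % 2 := (ZMod.intCast_eq_intCast_iff _ _ _).1 h
    set mz := (mx - my) / 2 with hmz
    have hm : mx = my + 2 * mz := by omega
    refine ⟨⟨Gamma15.pair 0 (2 * mz), center_mem mz⟩, ?_⟩
    apply Subtype.ext
    push_cast
    rw [hφZ]
    show (x : Gamma15) = Gamma15.pair 0 (2 * mz) * (y : Gamma15) * (φ (Gamma15.pair 0 (2 * mz)))⁻¹
    rw [hy, central_prod my mz φ hφ, hx]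
    apply pair_congr rfl
    omega

lemma invZ_surj : Function.Surjective invZ := by
  intro p
  have hcase : ∀ q : ZMod 2, q = 0 ∨ q = 1 := by decide
  rcases hcase p with rfl | rfl
  · exact ⟨⟨Gamma15.pair 0 (2 * 0), center_mem 0⟩, by rw [invZ_eq _ rfl]; norm_num⟩
  · exact ⟨⟨Gamma15.pair 0 (2 * 1), center_mem 1⟩, by rw [invZ_eq _ rfl]; norm_num⟩

lemma inva_mul_center (g : Gamma15) (m : ℤ) :
    inva (g * Gamma15.pair 0 (2 * m)) = inva g := by
  have hg : g = Gamma15.pair g.left.toAdd g.right.toAdd := rfl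
  rw [hg, mul_pair, inva_pair, inva_pair]
  simp only [Prod.mk.injEq, smul_zero, add_zero]
  constructor
  · push_cast
    linear_combination ((m : ℤ) : ZMod 2) * two_zmod
  · trivial

noncomputable def invb (q : Gamma15 ⧸ Subgroup.center Gamma15) : ZMod 2 × ZMod 2 :=
  Quotient.liftOn' q inva (by
    intro a b hab
    have h : a⁻¹ * b ∈ Subgroup.center Gamma15 := (QuotientGroup.leftRel_apply).1 hab
    obtain ⟨m, hm⟩ := center_eq _ h
    have hb : b = a * Gamma15.pair 0 (2 * m) := by
      rw [← hm]; group
    rw [hb, inva_mul_center])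

lemma invb_mk (g : Gamma15) : invb (QuotientGroup.mk g) = inva g := rfl

lemma conjbar_iff (φ : Gamma15 →* Gamma15)
    (hφ : ∀ (v : ℤ × ℤ) (k : ℤ),
      φ (Gamma15.pair v k) = Gamma15.pair (v.2, -v.1) (-k))
    (φbar : Gamma15 ⧸ Subgroup.center Gamma15 →* Gamma15 ⧸ Subgroup.center Gamma15)
    (hφbar : ∀ x : Gamma15, φbar (QuotientGroup.mk x) = QuotientGroup.mk (φ x))
    (x y : Gamma15 ⧸ Subgroup.center Gamma15) :
    twistedConj φbar x y ↔ invb x = invb y := by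
  obtain ⟨a, rfl⟩ := QuotientGroup.mk_surjective x
  obtain ⟨b, rfl⟩ := QuotientGroup.mk_surjective y
  rw [invb_mk, invb_mk]
  constructor
  · rintro ⟨z, hz⟩
    obtain ⟨c, rfl⟩ := QuotientGroup.mk_surjective z
    rw [hφbar] at hz
    have hz' : (QuotientGroup.mk a : Gamma15 ⧸ Subgroup.center Gamma15)
        = QuotientGroup.mk (c * b * (φ c)⁻¹) := by
      rw [hz]; rfl
    have hmem : a⁻¹ * (c * b * (φ c)⁻¹) ∈ Subgroup.center Gamma15 :=
      (QuotientGroup.eq).1 hz'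
    obtain ⟨m, hm⟩ := center_eq _ hmem
    have ha : c * b * (φ c)⁻¹ = a * Gamma15.pair 0 (2 * m) := by
      rw [← hm]; group
    have h1 : inva (c * b * (φ c)⁻¹) = inva b :=
      (conj_iff φ hφ _ _).1 ⟨c, rfl⟩
    rw [ha, inva_mul_center] at h1
    exact h1
  · intro h
    obtain ⟨z, hz⟩ := (conj_iff φ hφ a b).2 h
    refine ⟨QuotientGroup.mk z, ?_⟩
    rw [hφbar]
    rw [hz]
    rfl

lemma invb_surj : Function.Surjective invb := by
  intro p
  obtain ⟨g, hg⟩ := inva_surj p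
  exact ⟨QuotientGroup.mk g, hg⟩

/-- For `Γ = ℤ² ⋊ ℤ` (the generator acting by `v ↦ -v`, multiplication
`(v,k)·(w,ℓ) = (v + (-1)^k w, k + ℓ)`) and `φ(v,k) = (Mv, -k)` with `M = [[0,1],[-1,0]]`:
`φ` is an automorphism, `Z(Γ) = {(0,k) : k even}`, `R(φ) = 4`, `R(φ|_{Z(Γ)}) = 2` and
`R(φ̄) = 4`; in particular `R(φ) ≠ R(φ|_{Z(Γ)}) · R(φ̄)`, so the product formula for
Reidemeister numbers fails. -/
theorem stmt15 (φ : Gamma15 →* Gamma15)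
    (hφ : ∀ (v : ℤ × ℤ) (k : ℤ),
      φ (Gamma15.pair v k) = Gamma15.pair (v.2, -v.1) (-k))
    (φZ : ↥(Subgroup.center Gamma15) →* ↥(Subgroup.center Gamma15))
    (hφZ : ∀ x : ↥(Subgroup.center Gamma15), (φZ x : Gamma15) = φ (x : Gamma15))
    (φbar : Gamma15 ⧸ Subgroup.center Gamma15 →* Gamma15 ⧸ Subgroup.center Gamma15)
    (hφbar : ∀ x : Gamma15, φbar (QuotientGroup.mk x) = QuotientGroup.mk (φ x)) :
    (∀ (v w : ℤ × ℤ) (k l : ℤ),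
      Gamma15.pair v k * Gamma15.pair w l
        = Gamma15.pair (v + (((-1 : ℤˣ) ^ k : ℤˣ) : ℤ) • w) (k + l)) ∧
    Function.Bijective φ ∧
    (∀ g : Gamma15, g ∈ Subgroup.center Gamma15 ↔
      (g.left = 1 ∧ ∃ m : ℤ, g.right = Multiplicative.ofAdd (2 * m))) ∧
    reidemeisterNumber φ = 4 ∧
    reidemeisterNumber φZ = 2 ∧
    reidemeisterNumber φbar = 4 ∧
    reidemeisterNumber φ ≠ reidemeisterNumber φZ * reidemeisterNumber φbar := by

  have key : ∀ g : Gamma15, φ (φ (φ (φ g))) = g := by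
    intro g
    show φ (φ (φ (φ (Gamma15.pair g.left.toAdd g.right.toAdd))))
        = Gamma15.pair g.left.toAdd g.right.toAdd
    rw [hφ, hφ, hφ, hφ]
    apply pair_congr
    · simp
    · omega
  have h4 : reidemeisterNumber φ = 4 := by
    have e := quotEquivOfInvariant (twistedConj φ) inva
      (fun a b h => (conj_iff φ hφ a b).1 h) (fun a b h => (conj_iff φ hφ a b).2 h) inva_surj
    rw [reid_eq_of_equiv φ e]
    norm_num [Nat.card_eq_fintype_card]
  have h2 : reidemeisterNumber φZ = 2 := by
    have e := quotEquivOfInvariant (twistedConj φZ) invZ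
      (fun a b h => (conjZ_iff φ hφ φZ hφZ a b).1 h)
      (fun a b h => (conjZ_iff φ hφ φZ hφZ a b).2 h) invZ_surj
    rw [reid_eq_of_equiv φZ e]
    norm_num [Nat.card_eq_fintype_card]
  have hb : reidemeisterNumber φbar = 4 := by
    have e := quotEquivOfInvariant (twistedConj φbar) invb
      (fun a b h => (conjbar_iff φ hφ φbar hφbar a b).1 h)
      (fun a b h => (conjbar_iff φ hφ φbar hφbar a b).2 h) invb_surj
    rw [reid_eq_of_equiv φbar e]
    norm_num [Nat.card_eq_fintype_card]
  refine ⟨fun v w k l => mul_pair v w k l, ?_, center_iff, h4, h2, hb, ?_⟩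
  · have l1 : Function.LeftInverse (fun g => φ (φ (φ g))) ⇑φ := key
    have l2 : Function.LeftInverse ⇑φ (fun g => φ (φ (φ g))) := key
    exact ⟨l1.injective, l2.surjective⟩
  · rw [h4, h2, hb]
    decide
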